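/- Let X be a transitive d-dimensional shift of maximality type 0 (it has no maximal subsystem). Then X is an isolated point of the space T^d of transitive d-dimensional shifts if and only if X is a minimal shift of finite type. -/

import Mathlib

/-- The group `ℤ^d`. -/
abbrev ZD (d : ℕ) := Fin d → ℤ

/-- A configuration is a map `ℤ^d → ℤ`. -/
abbrev Config (d : ℕ) := ZD d → ℤ

/-- The shift map `σ^u`, defined by `σ^u(x)_v = x_{u+v}`. -/
def shiftMap {d : ℕ} (u : ZD d) (x : Config d) : Config d := fun v => x (u + v)

/-- The sup norm `‖·‖_∞` on `ℤ^d`, valued in `ℕ`. -/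
def normInf {d : ℕ} (n : ZD d) : ℕ := Finset.univ.sup fun i => (n i).natAbs

open Classical in
/-- The metric `δ` on configurations: `δ(x,y) = 2^{-min{‖n‖_∞ : x_n ≠ y_n}}`, `δ(x,x) = 0`. -/
noncomputable def deltaDist {d : ℕ} (x y : Config d) : ℝ :=
  if x = y then 0
  else (2 : ℝ) ^ (-((sInf {m : ℕ | ∃ n : ZD d, normInf n = m ∧ x n ≠ y n} : ℕ) : ℤ))

/-- The closure of a set of configurations with respect to the metric `δ`. -/
def deltaClosure {d : ℕ} (A : Set (Config d)) : Set (Config d) :=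
  {x | ∀ ε : ℝ, 0 < ε → ∃ a ∈ A, deltaDist x a < ε}

/-- A set of configurations is closed for `δ` when it contains all its limit points. -/
def IsDeltaClosed {d : ℕ} (A : Set (Config d)) : Prop := deltaClosure A ⊆ A

/-- A `d`-dimensional shift: a nonempty set of configurations over a common finite
alphabet, closed for `δ` and invariant under every shift map. -/
def IsShift {d : ℕ} (X : Set (Config d)) : Prop :=
  X.Nonempty ∧ (∃ A : Finset ℤ, ∀ x ∈ X, ∀ v : ZD d, x v ∈ A) ∧ IsDeltaClosed X ∧
    ∀ u : ZD d, ∀ x ∈ X, shiftMap u x ∈ X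

/-- The Hausdorff metric `δ_H` on the space of shifts. -/
noncomputable def deltaH {d : ℕ} (X Z : Set (Config d)) : ℝ :=
  max (⨆ x : X, ⨅ z : Z, deltaDist (x : Config d) (z : Config d))
      (⨆ z : Z, ⨅ x : X, deltaDist (x : Config d) (z : Config d))

/-- A subsystem of a shift `X`: a nonempty closed shift-invariant subset of `X`. -/
def IsSubsystem {d : ℕ} (Z X : Set (Config d)) : Prop :=
  Z.Nonempty ∧ Z ⊆ X ∧ IsDeltaClosed Z ∧ ∀ u : ZD d, ∀ z ∈ Z, shiftMap u z ∈ Z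

/-- A maximal subsystem of `X`: a proper subsystem such that any subsystem strictly
between it and `X` equals `X`. -/
def IsMaximalSubsystem {d : ℕ} (Z X : Set (Config d)) : Prop :=
  IsSubsystem Z X ∧ Z ≠ X ∧ ∀ Z', IsSubsystem Z' X → Z ⊂ Z' → Z' = X

/-- An outcast of `X`: a proper subsystem contained in no maximal subsystem of `X`. -/
def IsOutcast {d : ℕ} (Z X : Set (Config d)) : Prop :=
  IsSubsystem Z X ∧ Z ≠ X ∧ ∀ M, IsMaximalSubsystem M X → ¬ Z ⊆ M

/-- A pattern with finite support `U` (given by the values of `p` on `U`) appears in the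
configuration `x`. -/
def PatternAppears {d : ℕ} (U : Finset (ZD d)) (p : ZD d → ℤ) (x : Config d) : Prop :=
  ∃ u : ZD d, ∀ v ∈ U, x (u + v) = p v

/-- The set of configurations over the alphabet `A` avoiding every pattern in `F`. -/
def XofF {d : ℕ} (A : Finset ℤ) (F : Set (Finset (ZD d) × (ZD d → ℤ))) : Set (Config d) :=
  {x | (∀ v : ZD d, x v ∈ A) ∧ ∀ q ∈ F, ¬ PatternAppears q.1 q.2 x}

/-- A shift of finite type: defined by a finite alphabet and a finite set of forbidden
patterns. -/
def IsSFT {d : ℕ} (X : Set (Config d)) : Prop :=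
  ∃ (A : Finset ℤ) (F : Finset (Finset (ZD d) × (ZD d → ℤ))), X = XofF A (F : Set _)

/-- `X` is an isolated point of the subspace `S` (with the Hausdorff metric `δ_H`). -/
def IsolatedIn {d : ℕ} (S : Set (Set (Config d))) (X : Set (Config d)) : Prop :=
  X ∈ S ∧ ∃ ε : ℝ, 0 < ε ∧ ∀ Z ∈ S, deltaH X Z < ε → Z = X

/-- The orbit of a configuration under the shift action. -/
def orbit {d : ℕ} (x : Config d) : Set (Config d) := {y | ∃ u : ZD d, y = shiftMap u x}

/-- A shift is transitive when some point has dense orbit. -/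
def IsTransitive {d : ℕ} (X : Set (Config d)) : Prop :=
  IsShift X ∧ ∃ x ∈ X, X ⊆ deltaClosure (orbit x)

/-- A shift is minimal when its only subsystem is itself. -/
def IsMinimalShift {d : ℕ} (X : Set (Config d)) : Prop :=
  IsShift X ∧ ∀ Z, IsSubsystem Z X → Z = X


/-! ### Auxiliary lemmas -/

section Aux

variable {d : ℕ}

/-- Two configurations agree on the cube of radius `k`. -/
def Agree (k : ℕ) (x y : Config d) : Prop :=
  ∀ v : ZD d, normInf v ≤ k → x v = y v

lemma agree_refl (k : ℕ) (x : Config d) : Agree k x x := fun _ _ => rfl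

lemma agree_symm {k : ℕ} {x y : Config d} (h : Agree k x y) : Agree k y x :=
  fun v hv => (h v hv).symm

lemma agree_trans {k : ℕ} {x y z : Config d} (h1 : Agree k x y) (h2 : Agree k y z) :
    Agree k x z := fun v hv => (h1 v hv).trans (h2 v hv)

lemma agree_mono {k k' : ℕ} (hk : k ≤ k') {x y : Config d} (h : Agree k' x y) :
    Agree k x y := fun v hv => h v (le_trans hv hk)

lemma normInf_zero : normInf (0 : ZD d) = 0 :=
  Nat.le_zero.mp (Finset.sup_le fun i _ => by simp)

lemma normInf_add_le (u v : ZD d) : normInf (u + v) ≤ normInf u + normInf v := by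
  simp only [normInf]
  refine Finset.sup_le fun i _ => ?_
  calc ((u + v) i).natAbs = (u i + v i).natAbs := rfl
    _ ≤ (u i).natAbs + (v i).natAbs := Int.natAbs_add_le _ _
    _ ≤ normInf u + normInf v :=
        add_le_add (Finset.le_sup (f := fun j => (u j).natAbs) (Finset.mem_univ i))
          (Finset.le_sup (f := fun j => (v j).natAbs) (Finset.mem_univ i))

lemma shiftMap_zero (x : Config d) : shiftMap (0 : ZD d) x = x :=
  funext fun v => by simp [shiftMap]

lemma shiftMap_shiftMap (u v : ZD d) (x : Config d) :
    shiftMap u (shiftMap v x) = shiftMap (v + u) x :=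
  funext fun w => by simp [shiftMap, add_assoc]

lemma exists_ne_of_ne {x y : Config d} (h : x ≠ y) : ∃ n : ZD d, x n ≠ y n := by
  by_contra hc
  push_neg at hc
  exact h (funext hc)

lemma delta_self (x : Config d) : deltaDist x x = 0 := by simp [deltaDist]

lemma delta_eq_of_ne {x y : Config d} (h : x ≠ y) :
    deltaDist x y
      = (2 : ℝ) ^ (-((sInf {m : ℕ | ∃ n : ZD d, normInf n = m ∧ x n ≠ y n} : ℕ) : ℤ)) := by
  simp only [deltaDist, if_neg h]

lemma delta_nonneg (x y : Config d) : 0 ≤ deltaDist x y := by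
  by_cases h : x = y
  · simp [deltaDist, h]
  · rw [delta_eq_of_ne h]; positivity

lemma delta_le_one (x y : Config d) : deltaDist x y ≤ 1 := by
  by_cases h : x = y
  · simp [deltaDist, h]
  · rw [delta_eq_of_ne h]
    have h1 : ((2:ℝ) ^ (0 : ℤ)) = 1 := zpow_zero 2
    rw [← h1]
    exact zpow_le_zpow_right₀ one_le_two (by omega)

lemma delta_comm (x y : Config d) : deltaDist x y = deltaDist y x := by
  have hset : {m : ℕ | ∃ n : ZD d, normInf n = m ∧ x n ≠ y n}
      = {m : ℕ | ∃ n : ZD d, normInf n = m ∧ y n ≠ x n} := by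
    ext m; constructor <;> rintro ⟨n, hn, hne⟩ <;> exact ⟨n, hn, hne.symm⟩
  by_cases h : x = y
  · subst h; rfl
  · rw [delta_eq_of_ne h, delta_eq_of_ne (Ne.symm h), hset]

lemma agree_of_delta_lt {k : ℕ} {x y : Config d}
    (h : deltaDist x y < (2 : ℝ) ^ (-(k : ℤ))) : Agree k x y := by
  by_cases hxy : x = y
  · subst hxy; exact agree_refl k x
  · intro v hv
    by_contra hne
    rw [delta_eq_of_ne hxy] at h
    have hlt := (zpow_lt_zpow_iff_right₀ (one_lt_two (α := ℝ))).mp h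
    have hle : sInf {m : ℕ | ∃ n : ZD d, normInf n = m ∧ x n ≠ y n} ≤ normInf v :=
      Nat.sInf_le ⟨v, rfl, hne⟩
    omega

lemma delta_le_of_agree {k : ℕ} {x y : Config d} (h : Agree k x y) :
    deltaDist x y ≤ (2 : ℝ) ^ (-(k : ℤ) - 1) := by
  by_cases hxy : x = y
  · rw [hxy, delta_self]; positivity
  · rw [delta_eq_of_ne hxy]
    have hSne : {m : ℕ | ∃ n : ZD d, normInf n = m ∧ x n ≠ y n}.Nonempty := by
      obtain ⟨n, hn⟩ := exists_ne_of_ne hxy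
      exact ⟨normInf n, n, rfl, hn⟩
    obtain ⟨n, hneq, hnne⟩ := Nat.sInf_mem hSne
    have hgt : ¬ normInf n ≤ k := fun hle => hnne (h n hle)
    apply zpow_le_zpow_right₀ one_le_two
    omega

lemma delta_lt_of_agree {k : ℕ} {x y : Config d} (h : Agree k x y) :
    deltaDist x y < (2 : ℝ) ^ (-(k : ℤ)) :=
  lt_of_le_of_lt (delta_le_of_agree h)
    (zpow_lt_zpow_right₀ (one_lt_two (α := ℝ)) (by omega))

lemma delta_ultra (x y z : Config d) :
    deltaDist x z ≤ max (deltaDist x y) (deltaDist y z) := by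
  by_cases hxz : x = z
  · rw [hxz, delta_self]
    exact le_max_of_le_left (delta_nonneg _ _)
  · rw [delta_eq_of_ne hxz]
    have hSne : {m : ℕ | ∃ n : ZD d, normInf n = m ∧ x n ≠ z n}.Nonempty := by
      obtain ⟨n, hn⟩ := exists_ne_of_ne hxz
      exact ⟨normInf n, n, rfl, hn⟩
    obtain ⟨n, hneq, hnne⟩ := Nat.sInf_mem hSne
    by_cases hxy : x n = y n
    · have hyz : y n ≠ z n := fun h => hnne (hxy.trans h)
      have hyzne : y ≠ z := fun h => hyz (congrFun h n)
      refine le_max_of_le_right ?_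
      rw [delta_eq_of_ne hyzne]
      apply zpow_le_zpow_right₀ one_le_two
      have := Nat.sInf_le (show normInf n ∈ {m : ℕ | ∃ n : ZD d, normInf n = m ∧ y n ≠ z n}
        from ⟨n, rfl, hyz⟩)
      omega
    · have hxyne : x ≠ y := fun h => hxy (congrFun h n)
      refine le_max_of_le_left ?_
      rw [delta_eq_of_ne hxyne]
      apply zpow_le_zpow_right₀ one_le_two
      have := Nat.sInf_le (show normInf n ∈ {m : ℕ | ∃ n : ZD d, normInf n = m ∧ x n ≠ y n}
        from ⟨n, rfl, hxy⟩)
      omega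

lemma exists_scale {ε : ℝ} (hε : 0 < ε) : ∃ k : ℕ, (2 : ℝ) ^ (-(k : ℤ)) < ε := by
  obtain ⟨n, hn⟩ := exists_pow_lt_of_lt_one hε (by norm_num : (1/2 : ℝ) < 1)
  refine ⟨n, ?_⟩
  have : (2 : ℝ) ^ (-(n : ℤ)) = (1/2 : ℝ) ^ n := by
    rw [zpow_neg, ← zpow_natCast]
    simp [one_div, inv_zpow]
  rw [this]; exact hn

end Aux

section Closure

variable {d : ℕ}

lemma subset_deltaClosure (A : Set (Config d)) : A ⊆ deltaClosure A :=
  fun a ha ε hε => ⟨a, ha, by rw [delta_self]; exact hε⟩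

lemma deltaClosure_mono {A B : Set (Config d)} (h : A ⊆ B) :
    deltaClosure A ⊆ deltaClosure B := by
  intro x hx ε hε
  obtain ⟨a, ha, hd⟩ := hx ε hε
  exact ⟨a, h ha, hd⟩

lemma isDeltaClosed_deltaClosure (A : Set (Config d)) :
    IsDeltaClosed (deltaClosure A) := by
  intro x hx ε hε
  obtain ⟨b, hb, hdb⟩ := hx ε hε
  obtain ⟨a, ha, hda⟩ := hb ε hε
  refine ⟨a, ha, lt_of_le_of_lt (delta_ultra x b a) ?_⟩
  exact max_lt hdb hda

lemma agree_shift {k : ℕ} {u : ZD d} {x y : Config d}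
    (h : Agree (k + normInf u) x y) : Agree k (shiftMap u x) (shiftMap u y) := by
  intro v hv
  show x (u + v) = y (u + v)
  exact h (u + v) (le_trans (normInf_add_le u v) (by omega))

lemma deltaClosure_inv {A : Set (Config d)}
    (hA : ∀ u : ZD d, ∀ a ∈ A, shiftMap u a ∈ A) :
    ∀ u : ZD d, ∀ x ∈ deltaClosure A, shiftMap u x ∈ deltaClosure A := by
  intro u x hx ε hε
  obtain ⟨k, hk⟩ := exists_scale hε
  obtain ⟨a, ha, hda⟩ := hx ((2:ℝ) ^ (-((k + normInf u : ℕ) : ℤ))) (by positivity)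
  refine ⟨shiftMap u a, hA u a ha, ?_⟩
  have hag : Agree k (shiftMap u x) (shiftMap u a) := agree_shift (agree_of_delta_lt hda)
  exact lt_trans (delta_lt_of_agree hag) hk

lemma orbit_inv (w : Config d) :
    ∀ u : ZD d, ∀ a ∈ orbit w, shiftMap u a ∈ orbit w := by
  rintro u a ⟨u', rfl⟩
  exact ⟨u' + u, shiftMap_shiftMap u u' w⟩

lemma self_mem_orbit (w : Config d) : w ∈ orbit w := ⟨0, (shiftMap_zero w).symm⟩

lemma self_mem_orbitClosure (w : Config d) : w ∈ deltaClosure (orbit w) :=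
  subset_deltaClosure _ (self_mem_orbit w)

end Closure

section Hausdorff

variable {d : ℕ}

lemma bddBelow_delta (X : Set (Config d)) (z : Config d) :
    BddBelow (Set.range fun x : X => deltaDist (x : Config d) z) := by
  refine ⟨0, fun r hr => ?_⟩
  obtain ⟨i, rfl⟩ := hr
  exact delta_nonneg _ _

lemma deltaH_le {X Z : Set (Config d)} {B : ℝ} (hB : 0 ≤ B)
    (h1 : ∀ x ∈ X, ∃ z ∈ Z, deltaDist x z ≤ B)
    (h2 : ∀ z ∈ Z, ∃ x ∈ X, deltaDist x z ≤ B) : deltaH X Z ≤ B := by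
  refine max_le (Real.iSup_le (fun x => ?_) hB) (Real.iSup_le (fun z => ?_) hB)
  · obtain ⟨z, hz, hle⟩ := h1 x x.2
    refine ciInf_le_of_le ?_ (⟨z, hz⟩ : Z) hle
    refine ⟨0, fun r hr => ?_⟩
    obtain ⟨i, rfl⟩ := hr
    exact delta_nonneg _ _
  · obtain ⟨x, hx, hle⟩ := h2 z z.2
    exact ciInf_le_of_le (bddBelow_delta X z) (⟨x, hx⟩ : X) hle

lemma exists_close_of_deltaH_lt {X Z : Set (Config d)} (hXne : X.Nonempty)
    {ε : ℝ} (h : deltaH X Z < ε) :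
    ∀ z ∈ Z, ∃ x ∈ X, deltaDist x z < ε := by
  intro z hz
  haveI := hXne.to_subtype
  have h2 : (⨆ z : Z, ⨅ x : X, deltaDist (x : Config d) z) < ε :=
    lt_of_le_of_lt (le_max_right _ _) h
  have hb : BddAbove (Set.range fun z : Z => ⨅ x : X, deltaDist (x : Config d) z) := by
    refine ⟨1, fun r hr => ?_⟩
    obtain ⟨i, rfl⟩ := hr
    exact ciInf_le_of_le (bddBelow_delta X _) (Classical.arbitrary X) (delta_le_one _ _)
  have hlt : (⨅ x : X, deltaDist (x : Config d) z) < ε :=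
    lt_of_le_of_lt (le_ciSup hb (⟨z, hz⟩ : Z)) h2
  obtain ⟨x, hx⟩ := exists_lt_of_ciInf_lt hlt
  exact ⟨x, x.2, hx⟩

end Hausdorff

section Compactness

variable {d : ℕ}

/-- The cube of radius `k` as a finset. -/
noncomputable def cubeF (d k : ℕ) : Finset (ZD d) :=
  Fintype.piFinset fun _ => Finset.Icc (-(k : ℤ)) (k : ℤ)

lemma mem_cubeF {k : ℕ} {v : ZD d} : v ∈ cubeF d k ↔ normInf v ≤ k := by
  simp only [cubeF, Fintype.mem_piFinset, Finset.mem_Icc, normInf, Finset.sup_le_iff,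
    Finset.mem_univ, true_implies]
  exact forall_congr' fun i => by omega

lemma isClosed_of_deltaClosed {A : Set (Config d)} (hA : IsDeltaClosed A) :
    IsClosed A := by
  refine isClosed_of_closure_subset fun x hx => hA ?_
  intro ε hε
  obtain ⟨k, hk⟩ := exists_scale hε
  have hU : IsOpen {y : Config d | ∀ v ∈ cubeF d k, y v = x v} := by
    have heq : {y : Config d | ∀ v ∈ cubeF d k, y v = x v}
        = ⋂ v ∈ cubeF d k, {y : Config d | y v = x v} := by
      ext y; simp
    rw [heq]
    refine isOpen_biInter_finset fun v _ => ?_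
    show IsOpen ((fun y : Config d => y v) ⁻¹' {x v})
    exact IsOpen.preimage (continuous_apply (A := fun _ : ZD d => ℤ) v) (isOpen_discrete _)
  obtain ⟨a, haU, haA⟩ := mem_closure_iff.mp hx _ hU (fun v _ => rfl)
  refine ⟨a, haA, ?_⟩
  have hag : Agree k x a := fun v hv => (haU v (mem_cubeF.mpr hv)).symm
  exact lt_trans (delta_lt_of_agree hag) hk

lemma isCompact_alphabet (A : Finset ℤ) :
    IsCompact {x : Config d | ∀ v, x v ∈ A} := by
  have heq : {x : Config d | ∀ v, x v ∈ A}
      = Set.pi Set.univ (fun _ : ZD d => (A : Set ℤ)) := by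
    ext x; simp [Set.mem_pi]
  rw [heq]
  exact isCompact_univ_pi fun v => A.finite_toSet.isCompact

end Compactness

section Patterns

variable {d : ℕ}

/-- The central pattern of radius `k`, extended by `0`. -/
def pattB (k : ℕ) (y : Config d) : Config d :=
  fun v => if normInf v ≤ k then y v else 0

lemma pattB_finite (A : Finset ℤ) {X : Set (Config d)}
    (hA : ∀ x ∈ X, ∀ v, x v ∈ A) (k : ℕ) : (pattB k '' X).Finite := by
  have hinj : Set.InjOn (fun f : Config d => (fun v : cubeF d k => f (v : ZD d)))
      (pattB k '' X) := by
    rintro f ⟨y, _, rfl⟩ g ⟨y', _, rfl⟩ h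
    funext v
    by_cases hv : normInf v ≤ k
    · exact congrFun h ⟨v, mem_cubeF.mpr hv⟩
    · simp [pattB, hv]
  refine Set.Finite.of_finite_image ?_ hinj
  refine Set.Finite.subset (Set.Finite.pi
    (fun _ : cubeF d k => (A.finite_toSet.insert (0 : ℤ)))) ?_
  rintro g ⟨f, ⟨y, hyX, rfl⟩, rfl⟩
  intro v _
  by_cases hv : normInf (v : ZD d) ≤ k
  · simp only [pattB, if_pos hv]
    exact Set.mem_insert_of_mem _ (hA y hyX _)
  · simp only [pattB, if_neg hv]
    exact Set.mem_insert _ _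

end Patterns

section Core

variable {d : ℕ}

/-- Every central pattern of `X` appears in the transitive point within a bounded window. -/
lemma exists_window {X : Set (Config d)} (A : Finset ℤ) (hA : ∀ x ∈ X, ∀ v, x v ∈ A)
    {x₀ : Config d} (hx₀d : X ⊆ deltaClosure (orbit x₀)) (N₀ : ℕ) :
    ∃ M : ℕ, ∀ y ∈ X, ∃ u : ZD d, normInf u ≤ M ∧ Agree N₀ (shiftMap u x₀) y := by
  classical
  have hfin := pattB_finite A hA N₀
  have hΨ : ∀ p ∈ pattB N₀ '' X, ∃ u : ZD d,
      ∀ v : ZD d, normInf v ≤ N₀ → shiftMap u x₀ v = p v := by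
    rintro p ⟨y, hy, rfl⟩
    obtain ⟨a, ⟨u, rfl⟩, hda⟩ := hx₀d hy ((2:ℝ) ^ (-(N₀ : ℤ))) (by positivity)
    refine ⟨u, fun v hv => ?_⟩
    have hag := agree_of_delta_lt hda
    rw [pattB, if_pos hv]
    exact (hag v hv).symm
  choose! uu huu using hΨ
  have himg : ((fun p => normInf (uu p)) '' (pattB N₀ '' X)).Finite := hfin.image _
  obtain ⟨M, hM⟩ := himg.bddAbove
  refine ⟨M, fun y hy => ?_⟩
  have hp : pattB N₀ y ∈ pattB N₀ '' X := ⟨y, hy, rfl⟩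
  refine ⟨uu (pattB N₀ y), hM ⟨_, hp, rfl⟩, fun v hv => ?_⟩
  rw [huu _ hp v hv, pattB, if_pos hv]

/-- The central lemma exploiting isolation: if `w` locally looks like `X` at scale `N₀`
and contains all central `N₀`-patterns of `X`, then its orbit closure equals `X`. -/
lemma orbit_closure_eq {X : Set (Config d)} (hX : IsTransitive X) {ε : ℝ}
    (hiso : ∀ Z : Set (Config d), IsTransitive Z → deltaH X Z < ε → Z = X)
    {N₀ : ℕ} (hN : (2:ℝ) ^ (-(N₀ : ℤ)) < ε) (w : Config d)
    (hi : ∀ u : ZD d, ∃ x ∈ X, Agree N₀ (shiftMap u w) x)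
    (hii : ∀ y ∈ X, ∃ u : ZD d, Agree N₀ (shiftMap u w) y) :
    deltaClosure (orbit w) = X := by
  obtain ⟨⟨hXne, ⟨A, hA⟩, hXcl, hXinv⟩, x₀, hx₀X, hx₀d⟩ := hX
  set Z := deltaClosure (orbit w) with hZdef
  have hwZ : w ∈ Z := self_mem_orbitClosure w
  have hZinv := deltaClosure_inv (orbit_inv w)
  have hZcl := isDeltaClosed_deltaClosure (orbit w)
  have hZA : ∀ z ∈ Z, ∀ v, z v ∈ A := by
    intro z hz v
    obtain ⟨a, ⟨u, rfl⟩, hda⟩ := hz ((2:ℝ) ^ (-(normInf v : ℤ))) (by positivity)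
    have hag := agree_of_delta_lt hda
    have h1 : z v = w (u + v) := hag v le_rfl
    obtain ⟨x, hxX, hx⟩ := hi (u + v)
    have h2 : w (u + v) = x 0 := by
      have h0 := hx 0 (by rw [normInf_zero]; exact Nat.zero_le _)
      rw [show shiftMap (u+v) w 0 = w (u+v) by simp [shiftMap]] at h0
      exact h0
    rw [h1, h2]
    exact hA x hxX 0
  have hZsh : IsShift Z := ⟨⟨w, hwZ⟩, ⟨A, hZA⟩, hZcl, hZinv⟩
  have hZtr : IsTransitive Z := ⟨hZsh, w, hwZ, subset_rfl⟩
  have hH : deltaH X Z ≤ (2:ℝ) ^ (-(N₀ : ℤ) - 1) := by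
    refine deltaH_le (by positivity) ?_ ?_
    · intro y hy
      obtain ⟨u, hag⟩ := hii y hy
      refine ⟨shiftMap u w, subset_deltaClosure _ ⟨u, rfl⟩, ?_⟩
      exact delta_le_of_agree (agree_symm hag)
    · intro z hz
      obtain ⟨a, ⟨u, rfl⟩, hda⟩ := hz ((2:ℝ) ^ (-(N₀ : ℤ))) (by positivity)
      obtain ⟨x, hxX, hx⟩ := hi u
      have hag : Agree N₀ x z :=
        agree_symm (agree_trans (agree_of_delta_lt hda) hx)
      exact ⟨x, hxX, delta_le_of_agree hag⟩
  refine hiso Z hZtr (lt_of_le_of_lt hH ?_)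
  exact lt_trans (zpow_lt_zpow_right₀ (one_lt_two (α := ℝ)) (by omega)) hN

/-- Type 0 and non-minimality imply that points of proper subsystems are dense. -/
lemma dense_union_proper {X : Set (Config d)} (hX : IsTransitive X)
    (htype : ∀ Z : Set (Config d), ¬ IsMaximalSubsystem Z X)
    {Y : Set (Config d)} (hY : IsSubsystem Y X) (hYne : Y ≠ X) :
    ∀ x ∈ X, ∀ ε : ℝ, 0 < ε →
      ∃ W w, IsSubsystem W X ∧ W ≠ X ∧ w ∈ W ∧ deltaDist x w < ε := by
  set U := ⋃₀ {W : Set (Config d) | IsSubsystem W X ∧ W ≠ X} with hUdef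
  have hUX : U ⊆ X := by
    rintro a ⟨W, ⟨hW, _⟩, haW⟩
    exact hW.2.1 haW
  have hCX : deltaClosure U ⊆ X :=
    subset_trans (deltaClosure_mono hUX) hX.1.2.2.1
  by_cases hC : deltaClosure U = X
  · intro x hx ε hε
    have hxC : x ∈ deltaClosure U := hC ▸ hx
    obtain ⟨a, ⟨W, hWmem, haW⟩, hda⟩ := hxC ε hε
    exact ⟨W, a, hWmem.1, hWmem.2, haW, hda⟩
  · exfalso
    apply htype (deltaClosure U)
    have hUinv : ∀ u : ZD d, ∀ a ∈ U, shiftMap u a ∈ U := by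
      rintro u a ⟨W, hWmem, haW⟩
      exact ⟨W, hWmem, hWmem.1.2.2.2 u a haW⟩
    refine ⟨⟨?_, hCX, isDeltaClosed_deltaClosure U, deltaClosure_inv hUinv⟩, hC, ?_⟩
    · obtain ⟨y, hy⟩ := hY.1
      exact ⟨y, subset_deltaClosure U ⟨Y, ⟨hY, hYne⟩, hy⟩⟩
    · intro Z' hZ' hss
      by_contra hne'
      have hZU : Z' ⊆ U := fun a ha => ⟨Z', ⟨hZ', hne'⟩, ha⟩
      exact hss.2 (subset_trans hZU (subset_deltaClosure U))

/-- `z` locally looks like `X` at scale `N` everywhere. -/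
def AppX (X : Set (Config d)) (N : ℕ) (z : Config d) : Prop :=
  ∀ u : ZD d, ∃ x ∈ X, Agree N (shiftMap u z) x

lemma isSFT_of {X : Set (Config d)} (A : Finset ℤ) (hA : ∀ x ∈ X, ∀ v, x v ∈ A)
    (hXinv : ∀ u : ZD d, ∀ x ∈ X, shiftMap u x ∈ X) (N : ℕ)
    (h1 : ∀ z : Config d, AppX X N z → z ∈ X) : IsSFT X := by
  classical
  set ext : (∀ v ∈ cubeF d N, ℤ) → (ZD d → ℤ) :=
    fun f => fun v => if h : v ∈ cubeF d N then f v h else 0 with hext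
  set F : Finset (Finset (ZD d) × (ZD d → ℤ)) :=
    ((((cubeF d N).pi fun _ => A).image ext).filter
      (fun p => ¬ ∃ x ∈ X, ∀ v ∈ cubeF d N, x v = p v)).image
      (fun p => (cubeF d N, p)) with hF
  refine ⟨A, F, Set.Subset.antisymm ?_ ?_⟩
  · intro x hx
    refine ⟨fun v => hA x hx v, ?_⟩
    rintro ⟨U, p⟩ hq ⟨u, hu⟩
    rw [Finset.mem_coe, hF, Finset.mem_image] at hq
    obtain ⟨p', hp', heq⟩ := hq
    obtain ⟨hU, hpp⟩ := Prod.mk.inj heq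
    subst hU
    subst hpp
    rw [Finset.mem_filter] at hp'
    exact hp'.2 ⟨shiftMap u x, hXinv u x hx, fun v hv => hu v hv⟩
  · intro z hz
    obtain ⟨hzA, hzF⟩ := hz
    apply h1 z
    intro u
    by_cases hex : ∃ x ∈ X, ∀ v ∈ cubeF d N, x v = (ext fun v _ => z (u + v)) v
    · obtain ⟨x, hxX, hxv⟩ := hex
      refine ⟨x, hxX, fun v hv => ?_⟩
      have hv' : v ∈ cubeF d N := mem_cubeF.mpr hv
      have hx2 := hxv v hv'
      simp only [hext, dif_pos hv'] at hx2
      exact hx2.symm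
    · exfalso
      have hqmem : (cubeF d N, ext fun v _ => z (u + v)) ∈ (F : Set (Finset (ZD d) × (ZD d → ℤ))) := by
        refine Finset.mem_coe.mpr ?_
        rw [hF, Finset.mem_image]
        refine ⟨_, ?_, rfl⟩
        rw [Finset.mem_filter]
        refine ⟨Finset.mem_image.mpr ⟨fun v _ => z (u + v), ?_, rfl⟩, hex⟩
        exact Finset.mem_pi.mpr fun v hv => hzA (u + v)
      refine hzF _ hqmem ⟨u, fun v hv => ?_⟩
      simp only [hext, dif_pos hv]

end Core

section Main

variable {d : ℕ}

/-- Backward direction: a minimal SFT is isolated among transitive shifts. -/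
lemma isolated_of_minimal_sft {X : Set (Config d)} (hX : IsTransitive X)
    (hmin : IsMinimalShift X) (hsft : IsSFT X) :
    IsolatedIn {Y : Set (Config d) | IsTransitive Y} X := by
  obtain ⟨A, F, hXeq⟩ := hsft
  set R : ℕ := F.sup (fun q => q.1.sup fun v => normInf v) with hR
  refine ⟨hX, (2:ℝ) ^ (-(R : ℤ)), by positivity, ?_⟩
  intro Z hZ hH
  have hZsh : IsShift Z := hZ.1
  have hXne : X.Nonempty := hX.1.1
  have key : ∀ z ∈ Z, ∀ u : ZD d, ∃ x ∈ X, Agree R (shiftMap u z) x := by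
    intro z hz u
    have hzu : shiftMap u z ∈ Z := hZsh.2.2.2 u z hz
    obtain ⟨x, hx, hdx⟩ := exists_close_of_deltaH_lt hXne hH _ hzu
    exact ⟨x, hx, agree_symm (agree_of_delta_lt hdx)⟩
  have hsub : Z ⊆ X := by
    intro z hz
    rw [hXeq]
    constructor
    · intro v
      obtain ⟨x, hx, hag⟩ := key z hz v
      have h0 := hag 0 (by rw [normInf_zero]; exact Nat.zero_le _)
      have hzv : z v = x 0 := by rw [← h0]; simp [shiftMap]
      rw [hzv]
      have hx' : x ∈ XofF A (F : Set _) := hXeq ▸ hx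
      exact hx'.1 0
    · rintro ⟨U, p⟩ hq ⟨u, hu⟩
      obtain ⟨x, hx, hag⟩ := key z hz u
      have hx' : x ∈ XofF A (F : Set _) := hXeq ▸ hx
      have h1 : U.sup (fun v => normInf v) ≤ R :=
        Finset.le_sup (f := fun q : Finset (ZD d) × (ZD d → ℤ) => q.1.sup fun v => normInf v)
          (Finset.mem_coe.mp hq)
      refine hx'.2 (U, p) hq ⟨0, fun v hv => ?_⟩
      have hvR : normInf v ≤ R := le_trans (Finset.le_sup (f := fun v => normInf v) hv) h1
      have h3 : shiftMap u z v = x v := hag v hvR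
      have h4 : z (u + v) = p v := hu v hv
      show x (0 + v) = p v
      rw [zero_add]
      exact (h3.symm.trans (show shiftMap u z v = p v from h4))
  exact hmin.2 Z ⟨hZsh.1, hsub, hZsh.2.2.1, hZsh.2.2.2⟩

end Main

/-- A transitive shift of maximality type 0 is isolated in the space `T^d`
of transitive shifts iff it is a minimal shift of finite type. -/
theorem transitive_type_zero_isolated_iff
    (d : ℕ) (hd : 1 ≤ d) (X : Set (Config d)) (hX : IsTransitive X)
    (htype : ∀ Z : Set (Config d), ¬ IsMaximalSubsystem Z X) :
    IsolatedIn {Y : Set (Config d) | IsTransitive Y} X ↔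
      IsMinimalShift X ∧ IsSFT X := by
  constructor
  · intro hiso
    obtain ⟨hmem, ε, hε, hkey⟩ := hiso
    have hkey' : ∀ Z : Set (Config d), IsTransitive Z → deltaH X Z < ε → Z = X :=
      fun Z h1 h2 => hkey Z h1 h2
    obtain ⟨hXsh, x₀, hx₀X, hx₀d⟩ := id hX
    obtain ⟨hXne, ⟨A, hA⟩, hXcl, hXinv⟩ := id hXsh
    obtain ⟨N₀, hN₀⟩ := exists_scale hε
    -- Minimality.
    have hmin : ∀ Z : Set (Config d), IsSubsystem Z X → Z = X := by
      intro Z hZ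
      by_contra hZne
      obtain ⟨M, hM⟩ := exists_window A hA hx₀d N₀
      obtain ⟨W, w, hWsub, hWne, hwW, hdw⟩ :=
        dense_union_proper hX htype hZ hZne x₀ hx₀X ((2:ℝ) ^ (-((M + N₀ : ℕ) : ℤ)))
          (by positivity)
      have hagw : Agree (M + N₀) x₀ w := agree_of_delta_lt hdw
      have hwX : w ∈ X := hWsub.2.1 hwW
      have hi : ∀ u : ZD d, ∃ x ∈ X, Agree N₀ (shiftMap u w) x :=
        fun u => ⟨shiftMap u w, hXinv u w hwX, agree_refl _ _⟩
      have hii : ∀ y ∈ X, ∃ u : ZD d, Agree N₀ (shiftMap u w) y := by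
        intro y hy
        obtain ⟨u, huM, hagr⟩ := hM y hy
        refine ⟨u, fun v hv => ?_⟩
        have h1 : shiftMap u w v = shiftMap u x₀ v := by
          show w (u + v) = x₀ (u + v)
          exact (hagw (u + v) (le_trans (normInf_add_le u v) (by omega))).symm
        rw [h1, hagr v hv]
      have heq := orbit_closure_eq hX hkey' hN₀ w hi hii
      have horbW : orbit w ⊆ W := by rintro a ⟨u, rfl⟩; exact hWsub.2.2.2 u w hwW
      have hXW : X ⊆ W := by
        rw [← heq]
        exact subset_trans (deltaClosure_mono horbW) hWsub.2.2.1
      exact hWne (Set.Subset.antisymm hWsub.2.1 hXW)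
    -- Finite type.
    have hEx : ∃ N : ℕ, ∀ z : Config d, AppX X N z → z ∈ X := by
      by_contra hcon
      push_neg at hcon
      have hz : ∀ k : ℕ, ∃ z : Config d, AppX X (N₀ + k) z ∧ z ∉ X :=
        fun k => hcon (N₀ + k)
      choose z hzApp hzX using hz
      have hy : ∀ k : ℕ, ∃ y ∈ X, ∀ u : ZD d, ¬ Agree N₀ (shiftMap u (z k)) y := by
        intro k
        by_contra hcon2
        push_neg at hcon2
        have hi : ∀ u : ZD d, ∃ x ∈ X, Agree N₀ (shiftMap u (z k)) x := by
          intro u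
          obtain ⟨x, hx, hag⟩ := hzApp k u
          exact ⟨x, hx, agree_mono (by omega) hag⟩
        have heq := orbit_closure_eq hX hkey' hN₀ (z k) hi hcon2
        exact hzX k (heq ▸ self_mem_orbitClosure (z k))
      choose y hyX hyNot using hy
      have hPfin : (pattB N₀ '' X).Finite := pattB_finite A hA N₀
      haveI := hPfin.to_subtype
      set f : ℕ → (pattB N₀ '' X) := fun k => ⟨pattB N₀ (y k), ⟨y k, hyX k, rfl⟩⟩ with hf
      obtain ⟨⟨p, hp⟩, hfib⟩ := Finite.exists_infinite_fiber f
      obtain ⟨ys, hysX, hysp⟩ := id hp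
      have hinf : {k : ℕ | pattB N₀ (y k) = p}.Infinite := by
        have hss : f ⁻¹' {⟨p, hp⟩} ⊆ {k | pattB N₀ (y k) = p} := by
          intro kk hkk
          have hkk' : f kk = ⟨p, hp⟩ := hkk
          exact congrArg Subtype.val hkk'
        exact Set.Infinite.mono hss (Set.infinite_coe_iff.mp hfib)
      have hyagree : ∀ k ∈ {k : ℕ | pattB N₀ (y k) = p}, Agree N₀ (y k) ys := by
        intro k hk v hv
        have h1 := congrFun ((show pattB N₀ (y k) = p from hk).trans hysp.symm) v
        simpa [pattB, if_pos hv] using h1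
      set Ysets : ℕ → Set (Config d) := fun j =>
        {c | (∀ v, c v ∈ A) ∧ (∀ u : ZD d, ∃ x ∈ X, Agree (N₀ + j) (shiftMap u c) x)
          ∧ ∀ u : ZD d, ¬ Agree N₀ (shiftMap u c) ys} with hYdef
      have hnested : ∀ j, Ysets (j+1) ⊆ Ysets j := by
        rintro j c ⟨h1, h2, h3⟩
        exact ⟨h1, fun u => (h2 u).imp (fun x hx => ⟨hx.1, agree_mono (by omega) hx.2⟩), h3⟩
      have hone : ∀ j, (Ysets j).Nonempty := by
        intro j
        obtain ⟨k, hkmem, hkgt⟩ := hinf.exists_gt j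
        refine ⟨z k, ?_, ?_, ?_⟩
        · intro v
          obtain ⟨x, hx, hagx⟩ := hzApp k v
          have h0 := hagx 0 (by rw [normInf_zero]; exact Nat.zero_le _)
          have hzv : z k v = x 0 := by rw [← h0]; simp [shiftMap]
          rw [hzv]; exact hA x hx 0
        · intro u
          obtain ⟨x, hx, hag⟩ := hzApp k u
          exact ⟨x, hx, agree_mono (by omega) hag⟩
        · intro u hag
          exact hyNot k u (agree_trans hag (agree_symm (hyagree k hkmem)))
      have hclosed : ∀ j, IsDeltaClosed (Ysets j) := by
        intro j c hc
        refine ⟨?_, ?_, ?_⟩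
        · intro v
          obtain ⟨a, ha, hda⟩ := hc ((2:ℝ) ^ (-(normInf v : ℤ))) (by positivity)
          rw [agree_of_delta_lt hda v le_rfl]
          exact ha.1 v
        · intro u
          obtain ⟨a, ha, hda⟩ := hc ((2:ℝ) ^ (-((N₀ + j + normInf u : ℕ) : ℤ)))
            (by positivity)
          obtain ⟨x, hx, hag⟩ := ha.2.1 u
          have hca : Agree (N₀ + j) (shiftMap u c) (shiftMap u a) :=
            agree_shift (agree_mono (by omega) (agree_of_delta_lt hda))
          exact ⟨x, hx, agree_trans hca hag⟩
        · intro u hag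
          obtain ⟨a, ha, hda⟩ := hc ((2:ℝ) ^ (-((N₀ + normInf u : ℕ) : ℤ))) (by positivity)
          have hca : Agree N₀ (shiftMap u c) (shiftMap u a) :=
            agree_shift (agree_mono (by omega) (agree_of_delta_lt hda))
          exact ha.2.2 u (agree_trans (agree_symm hca) hag)
      have hcomp : IsCompact (Ysets 0) :=
        IsCompact.of_isClosed_subset (isCompact_alphabet A)
          (isClosed_of_deltaClosed (hclosed 0)) (fun c hc => hc.1)
      obtain ⟨cinf, hcinf⟩ := IsCompact.nonempty_iInter_of_sequence_nonempty_isCompact_isClosed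
        Ysets hnested hone hcomp (fun j => isClosed_of_deltaClosed (hclosed j))
      have hcj : ∀ j, cinf ∈ Ysets j := fun j => Set.mem_iInter.mp hcinf j
      have hcX : cinf ∈ X := by
        apply hXcl
        intro ε' hε'
        obtain ⟨k', hk'⟩ := exists_scale hε'
        obtain ⟨x, hx, hag⟩ := (hcj k').2.1 0
        rw [shiftMap_zero] at hag
        exact ⟨x, hx, lt_trans (delta_lt_of_agree (agree_mono (by omega) hag)) hk'⟩
      set D := {c ∈ X | ∀ u : ZD d, ¬ Agree N₀ (shiftMap u c) ys} with hDdef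
      have hDsub : IsSubsystem D X := by
        refine ⟨⟨cinf, hcX, (hcj 0).2.2⟩, fun c hc => hc.1, ?_, ?_⟩
        · intro c hc
          have hcX' : c ∈ X := hXcl (deltaClosure_mono (fun a (ha : a ∈ D) => ha.1) hc)
          refine ⟨hcX', fun u hag => ?_⟩
          obtain ⟨a, ha, hda⟩ := hc ((2:ℝ) ^ (-((N₀ + normInf u : ℕ) : ℤ))) (by positivity)
          have hca : Agree N₀ (shiftMap u c) (shiftMap u a) :=
            agree_shift (agree_mono (by omega) (agree_of_delta_lt hda))
          exact ha.2 u (agree_trans (agree_symm hca) hag)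
        · rintro u c ⟨hcX', hcnot⟩
          refine ⟨hXinv u c hcX', fun u' hag => hcnot (u + u') ?_⟩
          rwa [shiftMap_shiftMap u' u c] at hag
      have hDX := hmin D hDsub
      have hysD : ys ∈ D := hDX ▸ hysX
      exact hysD.2 0 (by rw [shiftMap_zero]; exact agree_refl _ _)
    obtain ⟨N, hN⟩ := hEx
    exact ⟨⟨hXsh, hmin⟩, isSFT_of A hA hXinv N hN⟩
  · rintro ⟨hmin, hsft⟩
    exact isolated_of_minimal_sft hX hmin hsft
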